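/- For an even prime power q ≡ 1 (mod 3), q ≥ 8, M(q−1, q−3) ≥ (q−1)(q+2)/3. -/

import Mathlib

noncomputable def hd {Ω : Type*} (π σ : Equiv.Perm Ω) : ℕ :=
  Set.ncard {x | π x ≠ σ x}

open Equiv

section Helpers

lemma ncard_le_two_of_subset_pair {α : Type*} {s : Set α} {p r : α} (h : s ⊆ {p, r}) :
    s.ncard ≤ 2 := by
  have h1 : s.ncard ≤ ({p, r} : Set α).ncard := Set.ncard_le_ncard h (Set.toFinite _)
  refine h1.trans ((Set.ncard_insert_le _ _).trans ?_)
  simp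

variable {F : Type*} [Field F] [CharP F 2] [DecidableEq F]

lemma agree_scal_scal (a c : F) (hac : a ≠ c) :
    {x : F | x ≠ 0 ∧ a * x = c * x} ⊆ {(0:F), 0} := by
  rintro x ⟨hx0, hx⟩
  exfalso
  have h : (a - c) * x = 0 := by linear_combination hx
  rcases mul_eq_zero.mp h with h | h
  · exact hac (by linear_combination h)
  · exact hx0 h

lemma agree_scal_aff (a c d : F) (hc : c ≠ 0) (hd' : d ≠ 0) :
    {x : F | x ≠ 0 ∧ a * x = (if x = d/c then d else c*x + d)} ⊆ {d/(a+c), d/c} := by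
  have h2 : (2 : F) = 0 := CharTwo.two_eq_zero
  rintro x ⟨hx0, hx⟩
  by_cases hxd : x = d / c
  · right; exact hxd
  · left
    rw [if_neg hxd] at hx
    have hacn : a + c ≠ 0 := by
      intro h
      have hac : a = c := by linear_combination h - c * h2
      rw [hac] at hx
      exact hd' (by linear_combination -hx)
    rw [eq_div_iff hacn]
    linear_combination hx + (c*x) * h2

lemma agree_aff_aff (a b c d : F) (ha : a ≠ 0) (hb : b ≠ 0) (hc : c ≠ 0) (hd' : d ≠ 0)
    (hne : ¬(a = c ∧ b = d)) (hcube : a^3 = c^3 → a = c) :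
    ∃ p r : F,
      {x : F | x ≠ 0 ∧ (if x = b/a then b else a*x + b) = (if x = d/c then d else c*x + d)}
        ⊆ {p, r} := by
  have h2 : (2 : F) = 0 := CharTwo.two_eq_zero
  by_cases hac : a = c
  · subst hac
    have hbd : b ≠ d := fun h => hne ⟨rfl, h⟩
    refine ⟨0, 0, ?_⟩
    rintro x ⟨hx0, hx⟩
    exfalso
    by_cases hxb : x = b / a <;> by_cases hxd : x = d / a
    · rw [if_pos hxb, if_pos hxd] at hx
      exact hbd hx
    · rw [if_pos hxb, if_neg hxd] at hx
      have hxa : x * a = b := (eq_div_iff ha).mp hxb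
      exact hd' (by linear_combination -hx - hxa)
    · rw [if_neg hxb, if_pos hxd] at hx
      have hxa : x * a = d := (eq_div_iff ha).mp hxd
      exact hb (by linear_combination hx - hxa)
    · rw [if_neg hxb, if_neg hxd] at hx
      exact hbd (by linear_combination hx)
  · have hacn : a + c ≠ 0 := fun h => hac (by linear_combination h - c * h2)
    by_cases cond : a*b = c*b + a*d
    · refine ⟨(b+d)/(a+c), b/a, ?_⟩
      rintro x ⟨hx0, hx⟩
      by_cases hxb : x = b/a
      · right; exact hxb
      by_cases hxd : x = d/c
      · exfalso
        rw [if_neg hxb, if_pos hxd] at hx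
        have hxc : x * c = d := (eq_div_iff hc).mp hxd
        have e3 : a*d + b*c = c*d := by linear_combination c*hx - a*hxc
        have key : b*d*(a^2 + a*c + c^2) = 0 := by
          linear_combination (a*d)*e3 + (d*(a+c))*cond + (b*c^2*d + a*c*d^2)*h2
        have quad : a^2 + a*c + c^2 = 0 := by
          rcases mul_eq_zero.mp key with h | h
          · exact absurd h (mul_ne_zero hb hd')
          · exact h
        exact hac (hcube (by linear_combination (a - c) * quad))
      · left
        rw [if_neg hxb, if_neg hxd] at hx
        rw [eq_div_iff hacn]
        linear_combination hx + (c*x - b) * h2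
    · refine ⟨(b+d)/(a+c), d/c, ?_⟩
      rintro x ⟨hx0, hx⟩
      by_cases hxd : x = d/c
      · right; exact hxd
      by_cases hxb : x = b/a
      · exfalso
        rw [if_pos hxb, if_neg hxd] at hx
        have hxa : x * a = b := (eq_div_iff ha).mp hxb
        exact cond (by linear_combination a*hx + c*hxa)
      · left
        rw [if_neg hxb, if_neg hxd] at hx
        rw [eq_div_iff hacn]
        linear_combination hx + (c*x - b) * h2

noncomputable def eAff (a b : F) (ha : a ≠ 0) : Equiv.Perm F :=
  (Equiv.swap (0:F) (b/a)).trans ((Equiv.mulLeft₀ a ha).trans (Equiv.addRight b))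

lemma eAff_apply (a b : F) (ha : a ≠ 0) (x : F) :
    eAff a b ha x = a * (Equiv.swap (0:F) (b/a) x) + b := rfl

lemma eAff_zero (a b : F) (ha : a ≠ 0) : eAff a b ha 0 = 0 := by
  rw [eAff_apply, Equiv.swap_apply_left]
  have h : a * (b/a) = b := by field_simp
  rw [h]
  exact CharTwo.add_self_eq_zero b

lemma eAff_apply_ne (a b : F) (ha : a ≠ 0) (x : F) (hx0 : x ≠ 0) :
    eAff a b ha x = if x = b/a then b else a*x + b := by
  rw [eAff_apply, Equiv.swap_apply_def, if_neg hx0]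
  by_cases h : x = b/a
  · rw [if_pos h, if_pos h, mul_zero, zero_add]
  · rw [if_neg h, if_neg h]

noncomputable def restr (e : Equiv.Perm F) (h0 : e 0 = 0) : Equiv.Perm {x : F // x ≠ 0} :=
  e.subtypePerm (fun x => by
    constructor
    · intro hx h
      rw [h, h0] at hx
      exact hx rfl
    · intro hx he
      exact hx (e.injective (by rw [he, h0])))

lemma restr_agree_ncard (e f : Equiv.Perm F) (he : e 0 = 0) (hf : f 0 = 0) :
    {x : {x : F // x ≠ 0} | restr e he x = restr f hf x}.ncard
      = {y : F | y ≠ 0 ∧ e y = f y}.ncard := by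
  rw [← Set.ncard_image_of_injective _ Subtype.val_injective]
  congr 1
  ext y
  simp only [Set.mem_image, Set.mem_setOf_eq, restr, Equiv.Perm.subtypePerm_apply,
    Subtype.ext_iff, Subtype.exists]
  constructor
  · rintro ⟨x, hx, hxy, rfl⟩
    exact ⟨hx, hxy⟩
  · rintro ⟨hy, hey⟩
    exact ⟨y, hy, hey, rfl⟩

end Helpers

lemma main_construction (F : Type*) [Field F] [Fintype F] [DecidableEq F] [CharP F 2]
    (q : ℕ) (hcard : Fintype.card F = q) (hq3 : q % 3 = 1) (hq8 : 8 ≤ q) :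
    ∃ A : Finset (Equiv.Perm (Fin (q - 1))),
      (∀ π ∈ A, ∀ σ ∈ A, π ≠ σ → q - 3 ≤ hd π σ) ∧ (q - 1) * (q + 2) / 3 ≤ A.card := by
  classical
  have h2 : (2 : F) = 0 := CharTwo.two_eq_zero
  have hu : Fintype.card Fˣ = q - 1 := by rw [Fintype.card_units, hcard]
  have h3 : 3 ∣ q - 1 := by omega
  haveI : Fact (Nat.Prime 3) := ⟨by norm_num⟩
  obtain ⟨ωu, hω⟩ := exists_prime_orderOf_dvd_card (G := Fˣ) 3 (by rw [hu]; exact h3)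
  set U := Subgroup.zpowers ωu with hU
  set ω : F := (ωu : F) with hωdef
  have hωu3 : ωu ^ 3 = 1 := by rw [← hω]; exact pow_orderOf_eq_one ωu
  have hω3 : ω ^ 3 = 1 := by
    have := congrArg (Units.val) hωu3
    push_cast at this
    exact this
  have hω1 : ω ≠ 1 := by
    intro h
    have h1 : ωu = 1 := Units.ext h
    rw [h1, orderOf_one] at hω
    omega
  have hsum : ω^2 + ω + 1 = 0 := by
    have hz : (ω - 1) * (ω^2 + ω + 1) = 0 := by linear_combination hω3
    rcases mul_eq_zero.mp hz with h | h
    · exact absurd (by linear_combination h) hω1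
    · exact h
  have cube_mem : ∀ u : Fˣ, (u:F)^3 = 1 → u ∈ U := by
    intro u hu3
    have hfac : ((u:F) - 1) * ((u:F) - ω) * ((u:F) - ω^2) = 0 := by
      linear_combination hu3 + ((u:F) - (u:F)^2) * hsum + ((u:F) - 1) * hω3
    rcases mul_eq_zero.mp hfac with h | h
    · rcases mul_eq_zero.mp h with h | h
      · have hu1 : u = 1 := Units.ext (by push_cast; linear_combination h)
        rw [hu1]; exact one_mem U
      · have hu1 : u = ωu := Units.ext (by linear_combination h)
        rw [hu1]; exact Subgroup.mem_zpowers ωu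
    · have hu1 : u = ωu^2 := Units.ext (by push_cast; linear_combination h)
      rw [hu1]
      exact pow_mem (Subgroup.mem_zpowers ωu) 2
  haveI : Fintype (Fˣ ⧸ U) := Fintype.ofFinite _
  have rep_cube : ∀ s t : Fˣ ⧸ U,
      ((Quotient.out s : Fˣ) : F)^3 = ((Quotient.out t : Fˣ) : F)^3 → s = t := by
    intro s t h
    have ha0 : ((Quotient.out s : Fˣ) : F) ≠ 0 := Units.ne_zero _
    have hst : ((Quotient.out s)⁻¹ * Quotient.out t) ∈ U := by
      apply cube_mem
      push_cast
      rw [mul_pow, inv_pow, ← h]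
      exact inv_mul_cancel₀ (pow_ne_zero 3 ha0)
    have heq := QuotientGroup.eq.mpr hst
    rwa [QuotientGroup.out_eq', QuotientGroup.out_eq'] at heq
  have rep_inj : ∀ s t : Fˣ ⧸ U,
      ((Quotient.out s : Fˣ) : F) = ((Quotient.out t : Fˣ) : F) → s = t := by
    intro s t h
    have : Quotient.out s = Quotient.out t := Units.ext h
    calc s = ↑(Quotient.out s) := (QuotientGroup.out_eq' s).symm
    _ = ↑(Quotient.out t) := by rw [this]
    _ = t := QuotientGroup.out_eq' t
  -- the domain
  have hΩcard : Fintype.card {x : F // x ≠ 0} = q - 1 := by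
    rw [Fintype.card_subtype_compl, Fintype.card_subtype_eq (0:F), hcard]
  -- permutations
  set mkScal : Fˣ → Equiv.Perm {x : F // x ≠ 0} :=
    fun a => restr (Equiv.mulLeft₀ (a:F) (Units.ne_zero a)) (by simp [Equiv.mulLeft₀]) with hmkScal
  set mkAff : (Fˣ ⧸ U) × Fˣ → Equiv.Perm {x : F // x ≠ 0} :=
    fun sb => restr (eAff ((Quotient.out sb.1 : Fˣ):F) ((sb.2 : Fˣ):F) (Units.ne_zero _))
      (eAff_zero _ _ _) with hmkAff
  set Φ : (Fˣ ⊕ (Fˣ ⧸ U) × Fˣ) → Equiv.Perm {x : F // x ≠ 0} :=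
    Sum.elim mkScal mkAff with hΦ
  have agree : ∀ i j, i ≠ j → ({x : {x : F // x ≠ 0} | Φ i x = Φ j x}).ncard ≤ 2 := by
    have scal_aff_bound : ∀ (a : Fˣ) (sb : (Fˣ ⧸ U) × Fˣ),
        ({y : F | y ≠ 0 ∧ Equiv.mulLeft₀ (a:F) (Units.ne_zero a) y
          = eAff ((Quotient.out sb.1 : Fˣ):F) ((sb.2 : Fˣ):F) (Units.ne_zero _) y}).ncard ≤ 2 := by
      intro a sb
      apply ncard_le_two_of_subset_pair (p := ((sb.2:Fˣ):F)/((a:F) + ((Quotient.out sb.1 : Fˣ):F)))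
        (r := ((sb.2:Fˣ):F)/((Quotient.out sb.1 : Fˣ):F))
      intro y hy
      obtain ⟨hy0, hy1⟩ := hy
      rw [eAff_apply_ne _ _ _ _ hy0] at hy1
      exact agree_scal_aff (a:F) _ _ (Units.ne_zero _) (Units.ne_zero _) ⟨hy0, hy1⟩
    rintro (a | ⟨s, b⟩) (c | ⟨t, d⟩) hij
    · -- scal scal
      simp only [hΦ, Sum.elim_inl, hmkScal]
      rw [restr_agree_ncard]
      have hac : (a : F) ≠ (c : F) := by
        intro h
        exact hij (by rw [Units.ext h])
      apply ncard_le_two_of_subset_pair (p := (0:F)) (r := (0:F))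
      intro y hy
      exact agree_scal_scal (a:F) (c:F) hac hy
    · -- scal aff
      simp only [hΦ, Sum.elim_inl, Sum.elim_inr, hmkScal, hmkAff]
      rw [restr_agree_ncard]
      exact scal_aff_bound a ⟨t, d⟩
    · -- aff scal
      simp only [hΦ, Sum.elim_inl, Sum.elim_inr, hmkScal, hmkAff]
      rw [restr_agree_ncard]
      have hsymm : {y : F | y ≠ 0 ∧ eAff ((Quotient.out s : Fˣ):F) ((b:Fˣ):F) (Units.ne_zero _) y
            = Equiv.mulLeft₀ (c:F) (Units.ne_zero c) y}
          = {y : F | y ≠ 0 ∧ Equiv.mulLeft₀ (c:F) (Units.ne_zero c) y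
            = eAff ((Quotient.out s : Fˣ):F) ((b:Fˣ):F) (Units.ne_zero _) y} := by
        ext y
        simp only [Set.mem_setOf_eq, eq_comm]
      rw [hsymm]
      exact scal_aff_bound c ⟨s, b⟩
    · -- aff aff
      simp only [hΦ, Sum.elim_inr, hmkAff]
      rw [restr_agree_ncard]
      have hne : ¬(((Quotient.out s : Fˣ):F) = ((Quotient.out t : Fˣ):F) ∧ ((b:Fˣ):F) = ((d:Fˣ):F)) := by
        rintro ⟨h1, h2'⟩
        exact hij (by rw [rep_inj s t h1, Units.ext h2'])
      have hcube : ((Quotient.out s : Fˣ):F)^3 = ((Quotient.out t : Fˣ):F)^3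
          → ((Quotient.out s : Fˣ):F) = ((Quotient.out t : Fˣ):F) := by
        intro h
        rw [rep_cube s t h]
      obtain ⟨p, r, hpr⟩ := agree_aff_aff _ _ _ _ (Units.ne_zero _) (Units.ne_zero _)
        (Units.ne_zero _) (Units.ne_zero _) hne hcube
      apply ncard_le_two_of_subset_pair (p := p) (r := r)
      intro y hy
      obtain ⟨hy0, hy1⟩ := hy
      rw [eAff_apply_ne _ _ _ _ hy0, eAff_apply_ne _ _ _ _ hy0] at hy1
      exact hpr ⟨hy0, hy1⟩
  have hΦinj : Function.Injective Φ := by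
    intro i j hij
    by_contra hne
    have h := agree i j hne
    have huniv : {x : {x : F // x ≠ 0} | Φ i x = Φ j x} = Set.univ := by
      ext x; simp [hij]
    rw [huniv, Set.ncard_univ, Nat.card_eq_fintype_card, hΩcard] at h
    omega
  set e : {x : F // x ≠ 0} ≃ Fin (q-1) := Fintype.equivFinOfCardEq hΩcard with he
  set Ψ : (Fˣ ⊕ (Fˣ ⧸ U) × Fˣ) → Equiv.Perm (Fin (q-1)) :=
    fun i => e.permCongr (Φ i) with hΨ
  have hΨinj : Function.Injective Ψ := fun i j h => hΦinj (e.permCongr.injective h)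
  have hdist : ∀ i j, i ≠ j → q - 3 ≤ hd (Ψ i) (Ψ j) := by
    intro i j hij
    have hset : {y : Fin (q-1) | Ψ i y ≠ Ψ j y}
        = ⇑e.symm ⁻¹' {x : {x : F // x ≠ 0} | Φ i x ≠ Φ j x} := by
      ext y
      simp only [hΨ, Set.mem_preimage, Set.mem_setOf_eq, Equiv.permCongr_apply, ne_eq,
        EmbeddingLike.apply_eq_iff_eq]
    have hhd : hd (Ψ i) (Ψ j) = ({x : {x : F // x ≠ 0} | Φ i x ≠ Φ j x}).ncard := by
      rw [hd, hset, ← Equiv.image_eq_preimage_symm, Set.ncard_image_of_injective _ e.injective]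
    rw [hhd]
    have hcompl : {x : {x : F // x ≠ 0} | Φ i x ≠ Φ j x}
        = {x : {x : F // x ≠ 0} | Φ i x = Φ j x}ᶜ := by
      ext x; simp
    have hsum2 := Set.ncard_add_ncard_compl {x : {x : F // x ≠ 0} | Φ i x = Φ j x}
    rw [Nat.card_eq_fintype_card, hΩcard] at hsum2
    have hle := agree i j hij
    rw [hcompl]
    omega
  refine ⟨Finset.image Ψ Finset.univ, ?_, ?_⟩
  · intro π hπ σ hσ hπσ
    simp only [Finset.mem_image, Finset.mem_univ, true_and] at hπ hσ
    obtain ⟨i, rfl⟩ := hπ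
    obtain ⟨j, rfl⟩ := hσ
    exact hdist i j (fun h => hπσ (by rw [h]))
  · rw [Finset.card_image_of_injective _ hΨinj, Finset.card_univ]
    have hQ3 : Fintype.card (Fˣ ⧸ U) * 3 = q - 1 := by
      have hq1 := Subgroup.card_eq_card_quotient_mul_card_subgroup U
      have hU3 : Nat.card ↥U = 3 := by rw [hU, Nat.card_zpowers, hω]
      rw [hU3, Nat.card_eq_fintype_card, Nat.card_eq_fintype_card, hu] at hq1
      omega
    have hcardI : Fintype.card (Fˣ ⊕ (Fˣ ⧸ U) × Fˣ)
        = (q-1) + Fintype.card (Fˣ ⧸ U) * (q-1) := by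
      simp [Fintype.card_sum, Fintype.card_prod, hu]
    rw [hcardI]
    set m := Fintype.card (Fˣ ⧸ U) with hm
    have h1 : q - 1 = 3*m := by omega
    have h2' : q + 2 = 3*m + 3 := by omega
    rw [h1, h2', show (3*m)*(3*m+3) = 3*(3*m + m*(3*m)) by ring,
      Nat.mul_div_cancel_left _ (by norm_num)]

theorem stmt10 (q : ℕ) (hq : IsPrimePow q) (heven : Even q) (hq3 : q % 3 = 1)
    (hq8 : 8 ≤ q) :
    ∃ A : Finset (Equiv.Perm (Fin (q - 1))),
      (∀ π ∈ A, ∀ σ ∈ A, π ≠ σ → q - 3 ≤ hd π σ) ∧ (q - 1) * (q + 2) / 3 ≤ A.card := by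
  classical
  obtain ⟨p, k, hp, hk, rfl⟩ := hq
  have hp' : p.Prime := Nat.prime_iff.mpr hp
  have hp2 : p = 2 := by
    have hdvd : (2:ℕ) ∣ p ^ k := even_iff_two_dvd.mp heven
    have h2p := Nat.prime_two.dvd_of_dvd_pow hdvd
    exact ((Nat.prime_dvd_prime_iff_eq Nat.prime_two hp').mp h2p).symm
  subst hp2
  haveI : Fact (Nat.Prime 2) := ⟨Nat.prime_two⟩
  haveI : Fintype (GaloisField 2 k) := Fintype.ofFinite _
  letI : DecidableEq (GaloisField 2 k) := Classical.decEq _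
  have hcard : Fintype.card (GaloisField 2 k) = 2 ^ k := by
    have h := GaloisField.card 2 k (by omega)
    rwa [Nat.card_eq_fintype_card] at h
  exact main_construction (GaloisField 2 k) (2^k) hcard hq3 hq8
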